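/- In the stratified setting, let X be a measurable space, K ≥ 1, F_k probability measures on X, and p_k, p'_k ∈ (0,1) with Σ_k p_k = Σ_k p'_k = 1; let P' on Z = X×{1,…,K} be given by P'(A×{k}) = p'_k F_k(A). Let Θ be a parameter set and ℓ : Θ × Z → [0, L] a bounded measurable loss. Let Z'_1 = (X'_1,S'_1),…,Z'_n = (X'_n,S'_n) be i.i.d. from P' and n'_k = #{i : S'_i = k}. Define R̃_{w*,n}(θ) = (1/n)Σ_{i=1}^n ℓ(θ,Z'_i) Σ_k 1{S'_i=k} p_k/p'_k and R̃_{ŵ*,n}(θ) = Σ_{i=1}^n ℓ(θ,Z'_i) Σ_k 1{S'_i=k} p_k/n'_k. Let ε ∈ (0,1/2) with p'_k ∈ (ε, 1−ε) for all k. Then for every δ ∈ (0,1) and every n ≥ 2 log(2K/δ)/ε², with probability at least 1−δ: min_k n'_k > 0 and, simultaneously for every θ ∈ Θ, |R̃_{ŵ*,n}(θ) − R̃_{w*,n}(θ)| ≤ (2L/ε²)√(log(2K/δ)/(2n)). -/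

import Mathlib

open MeasureTheory
open scoped ENNReal

/-- The stratified distribution on `X × Fin K` with stratum probabilities
`p k` and stratum-conditional distributions `F k`, i.e. `P(A × {k}) = p k • F k (A)`. -/
noncomputable def strataMeasure {X : Type*} [MeasurableSpace X] {K : ℕ}
    (p : Fin K → ℝ) (F : Fin K → Measure X) : Measure (X × Fin K) :=
  ∑ k : Fin K, ENNReal.ofReal (p k) • (F k).map (fun x => (x, k))

/-- Number `n'ₖ` of sample points in stratum `k`. -/
def nStratum {X : Type*} {K n : ℕ} (ω : Fin n → X × Fin K) (k : Fin K) : ℕ :=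
  (Finset.univ.filter fun i => (ω i).2 = k).card

lemma aux_cosh_le (x : ℝ) (hx : |x| ≤ 1) :
    Real.exp x + Real.exp (-x) ≤ 2 * Real.exp (x ^ 2 / 2) := by
  have h1 := Real.exp_bound hx (n := 4) (by norm_num)
  have hx' : |(-x)| ≤ 1 := by rwa [abs_neg]
  have h2 := Real.exp_bound hx' (n := 4) (by norm_num)
  simp only [Finset.sum_range_succ, Finset.sum_range_zero] at h1 h2
  norm_num [Nat.factorial] at h1 h2
  have habs : |x| ^ 4 = x ^ 4 := by
    rw [← abs_pow]; exact abs_of_nonneg (by positivity)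
  rw [habs] at h1 h2
  have hexp : (1 + x ^ 2 / 4) ^ 2 ≤ Real.exp (x ^ 2 / 2) := by
    have h := Real.add_one_le_exp (x ^ 2 / 4)
    have h0 : (0:ℝ) ≤ 1 + x ^ 2 / 4 := by positivity
    calc (1 + x ^ 2 / 4) ^ 2 ≤ Real.exp (x ^ 2 / 4) ^ 2 := by nlinarith
      _ = Real.exp (x ^ 2 / 2) := by
          rw [← Real.exp_nat_mul]
          congr 1
          push_cast
          ring
  have hb1 := abs_sub_le_iff.mp h1
  have hb2 := abs_sub_le_iff.mp h2
  nlinarith [hb1.1, hb2.1, hexp, sq_nonneg x, sq_nonneg (x^2)]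

lemma aux_bern_mgf (q lam : ℝ) (hq0 : 0 ≤ q) (hq1 : q ≤ 1) (hlam : |lam| ≤ 1) :
    1 - q + q * Real.exp lam ≤ Real.exp (lam * q + lam ^ 2 / 2) := by
  have hconv : ∀ y : ℝ, -1 ≤ y → y ≤ 1 →
      Real.exp (lam * y) ≤ (1 + y) / 2 * Real.exp lam + (1 - y) / 2 * Real.exp (-lam) := by
    intro y hy1 hy2
    have h := convexOn_exp.2 (Set.mem_univ lam) (Set.mem_univ (-lam))
      (by linarith : (0:ℝ) ≤ (1 + y) / 2) (by linarith : (0:ℝ) ≤ (1 - y) / 2)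
      (by ring : (1 + y) / 2 + (1 - y) / 2 = 1)
    simp only [smul_eq_mul] at h
    calc Real.exp (lam * y) = Real.exp ((1 + y) / 2 * lam + (1 - y) / 2 * -lam) := by ring_nf
      _ ≤ _ := h
  have h1 := hconv (-q) (by linarith) (by linarith)
  have h2 := hconv (1 - q) (by linarith) (by linarith)
  have hcosh := aux_cosh_le lam hlam
  have key : (1 - q) * Real.exp (lam * (-q)) + q * Real.exp (lam * (1 - q)) ≤
      Real.exp (lam ^ 2 / 2) := by
    nlinarith [mul_le_mul_of_nonneg_left h1 (by linarith : (0:ℝ) ≤ 1 - q),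
      mul_le_mul_of_nonneg_left h2 hq0]
  have hpos := (Real.exp_pos (lam * q)).le
  have e1 : Real.exp (lam * q) * Real.exp (lam * (-q)) = 1 := by
    rw [← Real.exp_add]; ring_nf; exact Real.exp_zero
  have e2 : Real.exp (lam * q) * Real.exp (lam * (1 - q)) = Real.exp lam := by
    rw [← Real.exp_add]; ring_nf
  have e3 : Real.exp (lam * q) * Real.exp (lam ^ 2 / 2) = Real.exp (lam * q + lam ^ 2 / 2) :=
    (Real.exp_add _ _).symm
  nlinarith [mul_le_mul_of_nonneg_left key hpos]

lemma aux_bernoulli_tail {Z : Type*} [MeasurableSpace Z] (ν : Measure Z)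
    [IsProbabilityMeasure ν]
    (g : Z → ℝ) (hg : Measurable g) (hg01 : ∀ z, g z = 0 ∨ g z = 1)
    (q : ℝ) (hq0 : 0 ≤ q) (hq1 : q ≤ 1) (hq : ∫ z, g z ∂ν = q)
    (n : ℕ) (s : ℝ) (hs0 : 0 ≤ s) (hs1 : s ≤ 1) :
    (Measure.pi fun _ : Fin n => ν)
      {ω | (n : ℝ) * s ≤ |(∑ i, g (ω i)) - n * q|} ≤
      2 * ENNReal.ofReal (Real.exp (-((n : ℝ) * s ^ 2) / 2)) := by
  letI : MeasureSpace Z := ⟨ν⟩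
  haveI : SigmaFinite (volume : Measure Z) := inferInstanceAs (SigmaFinite ν)
  set μ : Measure (Fin n → Z) := Measure.pi fun _ : Fin n => ν with hμ
  haveI : IsProbabilityMeasure μ := by
    rw [hμ]; infer_instance
  set S : (Fin n → Z) → ℝ := fun ω => ∑ i, g (ω i) with hS
  have hg0 : ∀ z, 0 ≤ g z := fun z => by rcases hg01 z with h | h <;> simp [h]
  have hg1 : ∀ z, g z ≤ 1 := fun z => by rcases hg01 z with h | h <;> simp [h]
  have hSmeas : Measurable S :=
    Finset.measurable_sum _ fun i _ => hg.comp (measurable_pi_apply i)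
  have hSbd : ∀ ω, 0 ≤ S ω ∧ S ω ≤ n := by
    intro ω
    constructor
    · exact Finset.sum_nonneg fun i _ => hg0 _
    · calc S ω ≤ ∑ _i : Fin n, (1:ℝ) := Finset.sum_le_sum fun i _ => hg1 _
        _ = n := by simp
  have hint : ∀ t : ℝ, Integrable (fun ω => Real.exp (t * S ω)) μ := by
    intro t
    refine Integrable.mono' (integrable_const (Real.exp (|t| * n)))
      ((Real.measurable_exp.comp (measurable_const.mul hSmeas)).aestronglyMeasurable)
      (ae_of_all _ fun ω => ?_)
    rw [Real.norm_eq_abs, Real.abs_exp, Real.exp_le_exp]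
    calc t * S ω ≤ |t * S ω| := le_abs_self _
      _ = |t| * |S ω| := abs_mul _ _
      _ ≤ |t| * n := by
          have h := hSbd ω
          have : |S ω| ≤ (n:ℝ) := abs_le.mpr ⟨by linarith [h.1], h.2⟩
          exact mul_le_mul_of_nonneg_left this (abs_nonneg t)
  have hgint : Integrable g ν := by
    refine Integrable.mono' (integrable_const 1) hg.aestronglyMeasurable
      (ae_of_all _ fun z => ?_)
    rw [Real.norm_eq_abs, abs_of_nonneg (hg0 z)]
    exact hg1 z
  have hmgf : ∀ t : ℝ, ∫ ω, Real.exp (t * S ω) ∂μ = (1 - q + q * Real.exp t) ^ n := by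
    intro t
    have step1 : ∀ ω : Fin n → Z, Real.exp (t * S ω) = ∏ i, Real.exp (t * g (ω i)) := by
      intro ω
      rw [hS]
      simp only [Finset.mul_sum]
      exact Real.exp_sum _ _
    have step2 : ∫ z, Real.exp (t * g z) ∂ν = 1 - q + q * Real.exp t := by
      have hpt : (fun z => Real.exp (t * g z)) =
          fun z => 1 + (Real.exp t - 1) * g z := by
        funext z
        rcases hg01 z with h | h <;> simp [h] <;> ring
      rw [hpt, integral_add (integrable_const 1) (hgint.const_mul _),
        MeasureTheory.integral_const_mul, hq]
      simp only [integral_const, probReal_univ, measure_univ, ENNReal.toReal_one, smul_eq_mul, one_mul]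
      ring
    calc ∫ ω, Real.exp (t * S ω) ∂μ = ∫ ω, ∏ i, Real.exp (t * g (ω i)) ∂μ := by
          simp_rw [step1]
      _ = (∫ z, Real.exp (t * g z) ∂ν) ^ n := by
          have := MeasureTheory.integral_fintype_prod_eq_pow (𝕜 := ℝ) (ι := Fin n) (μ := ν)
            (fun z => Real.exp (t * g z))
          simpa using this
      _ = (1 - q + q * Real.exp t) ^ n := by rw [step2]
  have hbase : ∀ t : ℝ, |t| ≤ 1 →
      (1 - q + q * Real.exp t) ^ n ≤ Real.exp ((n:ℝ) * (t * q + t ^ 2 / 2)) := by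
    intro t ht
    have h0 : (0:ℝ) ≤ 1 - q + q * Real.exp t := by nlinarith [(Real.exp_pos t).le]
    calc (1 - q + q * Real.exp t) ^ n ≤ Real.exp (t * q + t ^ 2 / 2) ^ n :=
          pow_le_pow_left₀ h0 (aux_bern_mgf q t hq0 hq1 ht) n
      _ = Real.exp ((n:ℝ) * (t * q + t ^ 2 / 2)) := by
          rw [← Real.exp_nat_mul]
  -- upper tail
  have up : μ {ω | (n:ℝ) * q + (n:ℝ) * s ≤ S ω} ≤
      ENNReal.ofReal (Real.exp (-((n : ℝ) * s ^ 2) / 2)) := by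
    have h := ProbabilityTheory.measure_ge_le_exp_mul_mgf (μ := μ) (X := S)
      ((n:ℝ) * q + (n:ℝ) * s) hs0 (hint s)
    have hmgf' : ProbabilityTheory.mgf S μ s = (1 - q + q * Real.exp s) ^ n := hmgf s
    rw [hmgf'] at h
    have h2 : Real.exp (-s * ((n:ℝ) * q + (n:ℝ) * s)) * (1 - q + q * Real.exp s) ^ n ≤
        Real.exp (-((n : ℝ) * s ^ 2) / 2) := by
      calc Real.exp (-s * ((n:ℝ) * q + (n:ℝ) * s)) * (1 - q + q * Real.exp s) ^ n ≤
            Real.exp (-s * ((n:ℝ) * q + (n:ℝ) * s)) *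
              Real.exp ((n:ℝ) * (s * q + s ^ 2 / 2)) := by
            exact mul_le_mul_of_nonneg_left (hbase s (abs_le.mpr ⟨by linarith, hs1⟩))
              (Real.exp_pos _).le
        _ = Real.exp (-s * ((n:ℝ) * q + (n:ℝ) * s) + (n:ℝ) * (s * q + s ^ 2 / 2)) :=
            (Real.exp_add _ _).symm
        _ = Real.exp (-((n : ℝ) * s ^ 2) / 2) := by congr 1; ring
    have hμfin : μ {ω | (n:ℝ) * q + (n:ℝ) * s ≤ S ω} ≠ ⊤ := measure_ne_top _ _
    rw [← ENNReal.ofReal_toReal hμfin]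
    exact ENNReal.ofReal_le_ofReal (le_trans h h2)
  -- lower tail
  have lo : μ {ω | S ω ≤ (n:ℝ) * q - (n:ℝ) * s} ≤
      ENNReal.ofReal (Real.exp (-((n : ℝ) * s ^ 2) / 2)) := by
    have h := ProbabilityTheory.measure_le_le_exp_mul_mgf (μ := μ) (X := S)
      ((n:ℝ) * q - (n:ℝ) * s) (neg_nonpos.mpr hs0) (hint (-s))
    have hmgf' : ProbabilityTheory.mgf S μ (-s) = (1 - q + q * Real.exp (-s)) ^ n := hmgf (-s)
    rw [hmgf'] at h
    have h2 : Real.exp (-(-s) * ((n:ℝ) * q - (n:ℝ) * s)) * (1 - q + q * Real.exp (-s)) ^ n ≤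
        Real.exp (-((n : ℝ) * s ^ 2) / 2) := by
      calc Real.exp (-(-s) * ((n:ℝ) * q - (n:ℝ) * s)) * (1 - q + q * Real.exp (-s)) ^ n ≤
            Real.exp (-(-s) * ((n:ℝ) * q - (n:ℝ) * s)) *
              Real.exp ((n:ℝ) * ((-s) * q + (-s) ^ 2 / 2)) := by
            exact mul_le_mul_of_nonneg_left
              (hbase (-s) (by rw [abs_neg]; exact abs_le.mpr ⟨by linarith, hs1⟩))
              (Real.exp_pos _).le
        _ = Real.exp (-(-s) * ((n:ℝ) * q - (n:ℝ) * s) + (n:ℝ) * ((-s) * q + (-s) ^ 2 / 2)) :=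
            (Real.exp_add _ _).symm
        _ = Real.exp (-((n : ℝ) * s ^ 2) / 2) := by congr 1; ring
    have hμfin : μ {ω | S ω ≤ (n:ℝ) * q - (n:ℝ) * s} ≠ ⊤ := measure_ne_top _ _
    rw [← ENNReal.ofReal_toReal hμfin]
    exact ENNReal.ofReal_le_ofReal (le_trans h h2)
  have hsub : {ω : Fin n → Z | (n : ℝ) * s ≤ |S ω - n * q|} ⊆
      {ω | (n:ℝ) * q + (n:ℝ) * s ≤ S ω} ∪ {ω | S ω ≤ (n:ℝ) * q - (n:ℝ) * s} := by
    intro ω hω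
    rcases le_abs.mp (Set.mem_setOf_eq ▸ hω) with h | h
    · left; simp only [Set.mem_setOf_eq]; linarith
    · right; simp only [Set.mem_setOf_eq]; linarith
  calc μ {ω | (n : ℝ) * s ≤ |S ω - n * q|} ≤
        μ ({ω | (n:ℝ) * q + (n:ℝ) * s ≤ S ω} ∪ {ω | S ω ≤ (n:ℝ) * q - (n:ℝ) * s}) :=
        measure_mono hsub
    _ ≤ μ {ω | (n:ℝ) * q + (n:ℝ) * s ≤ S ω} + μ {ω | S ω ≤ (n:ℝ) * q - (n:ℝ) * s} :=
        measure_union_le _ _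
    _ ≤ ENNReal.ofReal (Real.exp (-((n : ℝ) * s ^ 2) / 2)) +
        ENNReal.ofReal (Real.exp (-((n : ℝ) * s ^ 2) / 2)) := add_le_add up lo
    _ = 2 * ENNReal.ofReal (Real.exp (-((n : ℝ) * s ^ 2) / 2)) := (two_mul _).symm

lemma aux_strata_apply {X : Type*} [MeasurableSpace X] {K : ℕ}
    (p' : Fin K → ℝ) (F : Fin K → Measure X) [∀ k, IsProbabilityMeasure (F k)]
    (hp' : ∀ k, 0 ≤ p' k) (k : Fin K) :
    strataMeasure p' F {z | z.2 = k} = ENNReal.ofReal (p' k) := by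
  have hms : MeasurableSet {z : X × Fin K | z.2 = k} :=
    measurable_snd (measurableSet_singleton k)
  rw [strataMeasure]
  rw [Measure.coe_finset_sum, Finset.sum_apply]
  have hterm : ∀ j : Fin K,
      (ENNReal.ofReal (p' j) • (F j).map (fun x => (x, j))) {z | z.2 = k} =
        if j = k then ENNReal.ofReal (p' j) else 0 := by
    intro j
    rw [Measure.smul_apply, Measure.map_apply measurable_prodMk_right hms]
    by_cases h : j = k
    · subst h
      have : (fun x : X => (x, j)) ⁻¹' {z | z.2 = j} = Set.univ := by
        ext x; simp
      simp [this]
    · have : (fun x : X => (x, j)) ⁻¹' {z | z.2 = k} = (∅ : Set X) := by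
        ext x; simp [h]
      simp [this, h]
  simp_rw [hterm]
  simp

lemma aux_strata_prob {X : Type*} [MeasurableSpace X] {K : ℕ}
    (p' : Fin K → ℝ) (F : Fin K → Measure X) [∀ k, IsProbabilityMeasure (F k)]
    (hp' : ∀ k, 0 ≤ p' k) (hsum : ∑ k, p' k = 1) :
    IsProbabilityMeasure (strataMeasure p' F) := by
  constructor
  rw [strataMeasure, Measure.coe_finset_sum, Finset.sum_apply]
  have hterm : ∀ j : Fin K,
      (ENNReal.ofReal (p' j) • (F j).map (fun x => (x, j))) Set.univ =
        ENNReal.ofReal (p' j) := by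
    intro j
    rw [Measure.smul_apply, Measure.map_apply measurable_prodMk_right MeasurableSet.univ]
    simp
  simp_rw [hterm]
  rw [← ENNReal.ofReal_sum_of_nonneg (fun j _ => hp' j), hsum, ENNReal.ofReal_one]

lemma aux_count {X : Type*} {K n : ℕ} (ω : Fin n → X × Fin K) (k : Fin K) :
    ∑ i, (if (ω i).2 = k then (1:ℝ) else 0) = (nStratum ω k : ℝ) := by
  rw [Finset.sum_ite, Finset.sum_const, Finset.sum_const_zero, add_zero, nsmul_eq_mul,
    mul_one, nStratum]

lemma aux_fiber {X : Type*} {K n : ℕ} (ω : Fin n → X × Fin K) (v : Fin K → ℝ) :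
    ∑ i, v ((ω i).2) = ∑ k, (nStratum ω k : ℝ) * v k := by
  have h1 : ∀ i, v ((ω i).2) = ∑ k, if (ω i).2 = k then v k else 0 := by
    intro i; rw [Finset.sum_ite_eq]; simp
  simp_rw [h1]
  rw [Finset.sum_comm]
  refine Finset.sum_congr rfl fun k _ => ?_
  rw [Finset.sum_ite, Finset.sum_const, Finset.sum_const_zero, add_zero, nsmul_eq_mul, nStratum]

lemma aux_det {X : Type*} {Θ : Type*} {K n : ℕ}
    (p p' : Fin K → ℝ) (ℓ : Θ → X × Fin K → ℝ) (L ε s t : ℝ)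
    (hp0 : ∀ k, 0 ≤ p k) (hpsum : ∑ k, p k = 1)
    (hεp' : ∀ k, ε < p' k) (hε0 : 0 < ε) (hε1 : ε ≤ 1)
    (hℓnonneg : ∀ θ z, 0 ≤ ℓ θ z) (hℓle : ∀ θ z, ℓ θ z ≤ L)
    (hn0 : 0 < n) (hst : s = 2*t) (ht0 : 0 ≤ t) (hsε : s ≤ ε)
    (ω : Fin n → X × Fin K)
    (hd : ∀ k, |(nStratum ω k : ℝ) - n * p' k| ≤ n * s) :
    (∀ k, 0 < nStratum ω k) ∧
      ∀ θ : Θ,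
        |(∑ i, ℓ θ (ω i) * ∑ k, if (ω i).2 = k then p k / (nStratum ω k : ℝ) else 0) -
          (1 / (n:ℝ)) * ∑ i, ℓ θ (ω i) * ∑ k, if (ω i).2 = k then p k / p' k else 0| ≤
          (2 * L / ε ^ 2) * t := by
  have hn0' : (0:ℝ) < n := by exact_mod_cast hn0
  have hs0 : 0 ≤ s := by rw [hst]; linarith
  have hpos : ∀ k, 0 < nStratum ω k := by
    intro k
    have h := abs_le.mp (hd k)
    have hk := hεp' k
    have : (0:ℝ) < (nStratum ω k : ℝ) := by nlinarith [h.1]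
    exact_mod_cast this
  refine ⟨hpos, fun θ => ?_⟩
  have hL0 : 0 ≤ L := le_trans (hℓnonneg θ (ω ⟨0, hn0⟩)) (hℓle θ (ω ⟨0, hn0⟩))
  set m : Fin K → ℝ := fun k => (nStratum ω k : ℝ) with hmdef
  have hm : ∀ k, 0 < m k := fun k => by simpa [hmdef] using (Nat.cast_pos (α := ℝ)).mpr (hpos k)
  set h : Fin K → ℝ := fun k => p k / m k - p k / (n * p' k) with hhdef
  have hrw1 : ∀ i : Fin n,
      (∑ k, if (ω i).2 = k then p k / (nStratum ω k : ℝ) else 0) = p ((ω i).2) / m ((ω i).2) := by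
    intro i; rw [Finset.sum_ite_eq]; simp [hmdef]
  have hrw2 : ∀ i : Fin n,
      (∑ k, if (ω i).2 = k then p k / p' k else 0) = p ((ω i).2) / p' ((ω i).2) := by
    intro i; rw [Finset.sum_ite_eq]; simp
  simp_rw [hrw1, hrw2]
  have hAB : (∑ i, ℓ θ (ω i) * (p ((ω i).2) / m ((ω i).2))) -
      (1 / (n:ℝ)) * ∑ i, ℓ θ (ω i) * (p ((ω i).2) / p' ((ω i).2)) =
      ∑ i, ℓ θ (ω i) * h ((ω i).2) := by
    rw [Finset.mul_sum, ← Finset.sum_sub_distrib]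
    refine Finset.sum_congr rfl fun i _ => ?_
    rw [hhdef]
    ring
  rw [hAB]
  have step1 : |∑ i, ℓ θ (ω i) * h ((ω i).2)| ≤ ∑ i, L * |h ((ω i).2)| := by
    refine (Finset.abs_sum_le_sum_abs _ _).trans (Finset.sum_le_sum fun i _ => ?_)
    rw [abs_mul, abs_of_nonneg (hℓnonneg θ (ω i))]
    exact mul_le_mul_of_nonneg_right (hℓle θ (ω i)) (abs_nonneg _)
  have step2 : ∑ i, L * |h ((ω i).2)| = L * ∑ k, m k * |h k| := by
    rw [← Finset.mul_sum]
    congr 1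
    exact aux_fiber ω (fun k => |h k|)
  have step3 : ∀ k, m k * |h k| ≤ p k * (s / ε) := by
    intro k
    have hmk := hm k
    have hp'k := (hε0.trans (hεp' k))
    have hdk := hd k
    have hdk' : |(n:ℝ) * p' k - m k| ≤ n * s := by
      rw [abs_sub_comm]; exact hdk
    have key : m k * h k = p k / ((n:ℝ) * p' k) * ((n:ℝ) * p' k - m k) := by
      rw [hhdef]
      field_simp
    have h2 : m k * |h k| = |p k / ((n:ℝ) * p' k)| * |(n:ℝ) * p' k - m k| := by
      rw [← abs_mul, ← key, abs_mul, abs_of_nonneg hmk.le]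
    rw [h2, abs_of_nonneg (div_nonneg (hp0 k) (mul_pos hn0' hp'k).le)]
    calc p k / ((n:ℝ) * p' k) * |(n:ℝ) * p' k - m k| ≤
          p k / ((n:ℝ) * p' k) * ((n:ℝ) * s) :=
          mul_le_mul_of_nonneg_left hdk' (div_nonneg (hp0 k) (mul_pos hn0' hp'k).le)
      _ = p k * (s / p' k) := by field_simp
      _ ≤ p k * (s / ε) := by
          refine mul_le_mul_of_nonneg_left ?_ (hp0 k)
          exact div_le_div_of_nonneg_left hs0 hε0 (hεp' k).le
  have step4 : ∑ k, m k * |h k| ≤ s / ε := by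
    calc ∑ k, m k * |h k| ≤ ∑ k, p k * (s / ε) := Finset.sum_le_sum fun k _ => step3 k
      _ = (∑ k, p k) * (s / ε) := (Finset.sum_mul _ _ _).symm
      _ = s / ε := by rw [hpsum, one_mul]
  calc |∑ i, ℓ θ (ω i) * h ((ω i).2)| ≤ L * ∑ k, m k * |h k| := by
        rw [← step2]; exact step1
    _ ≤ L * (s / ε) := mul_le_mul_of_nonneg_left step4 hL0
    _ ≤ (2 * L / ε ^ 2) * t := by
        rw [hst, div_mul_eq_mul_div, le_div_iff₀ (by positivity : (0:ℝ) < ε ^ 2)]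
        have heq : L * (2 * t / ε) * ε ^ 2 = 2 * L * t * ε := by
          field_simp
        rw [heq]
        nlinarith [mul_nonneg hL0 ht0]


/-- Lemma 3: uniform control of the deviation between the plug-in
weighted empirical risk (weights `p k / n'ₖ`) and the ideally weighted
empirical risk (weights `p k / p' k`), for stratified data; the i.i.d. sample
from `P'` is modelled by the product measure on `Fin n → X × Fin K`. -/
theorem plugin_vs_ideal_weighted_risk_stratified
    {X : Type*} [MeasurableSpace X] {Θ : Type*}
    (K : ℕ) (hK : 1 ≤ K)
    (F : Fin K → Measure X) [∀ k, IsProbabilityMeasure (F k)]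
    (p p' : Fin K → ℝ)
    (hp : ∀ k, p k ∈ Set.Ioo (0:ℝ) 1) (hp' : ∀ k, p' k ∈ Set.Ioo (0:ℝ) 1)
    (hpsum : ∑ k, p k = 1) (hp'sum : ∑ k, p' k = 1)
    (ℓ : Θ → X × Fin K → ℝ) (hℓmeas : ∀ θ, Measurable (ℓ θ))
    (L : ℝ) (hℓnonneg : ∀ θ z, 0 ≤ ℓ θ z) (hℓle : ∀ θ z, ℓ θ z ≤ L)
    (ε : ℝ) (hε : ε ∈ Set.Ioo (0:ℝ) (1/2)) (hp'ε : ∀ k, p' k ∈ Set.Ioo ε (1 - ε))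
    (n : ℕ) (δ : ℝ) (hδ : δ ∈ Set.Ioo (0:ℝ) 1)
    (hn : 2 * Real.log (2 * K / δ) / ε ^ 2 ≤ (n : ℝ)) :
    ENNReal.ofReal (1 - δ) ≤
      (Measure.pi fun _ : Fin n => strataMeasure p' F)
        {ω | (∀ k, 0 < nStratum ω k) ∧
          ∀ θ : Θ,
            |(∑ i, ℓ θ (ω i) *
                ∑ k, if (ω i).2 = k then p k / (nStratum ω k : ℝ) else 0) -
              (1 / (n : ℝ)) * ∑ i, ℓ θ (ω i) *
                ∑ k, if (ω i).2 = k then p k / p' k else 0| ≤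
            (2 * L / ε ^ 2) * Real.sqrt (Real.log (2 * K / δ) / (2 * n))} := by
  obtain ⟨hε0, hε12⟩ := hε
  obtain ⟨hδ0, hδ1⟩ := hδ
  have hν : IsProbabilityMeasure (strataMeasure p' F) :=
    aux_strata_prob p' F (fun k => (hp' k).1.le) hp'sum
  set ν := strataMeasure p' F with hνdef
  set μ : Measure (Fin n → X × Fin K) := Measure.pi fun _ : Fin n => ν with hμdef
  haveI : IsProbabilityMeasure μ := by rw [hμdef]; infer_instance
  have hK1 : (1:ℝ) ≤ (K:ℝ) := by exact_mod_cast hK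
  have h2K : (1:ℝ) < 2 * K / δ := by
    rw [lt_div_iff₀ hδ0]; nlinarith
  have hLg : 0 < Real.log (2 * K / δ) := Real.log_pos h2K
  have hn0 : 0 < n := by
    by_contra hcon
    push_neg at hcon
    have : n = 0 := by omega
    rw [this] at hn
    simp only [Nat.cast_zero] at hn
    have : 0 < 2 * Real.log (2 * K / δ) / ε ^ 2 := by positivity
    linarith
  have hn0' : (0:ℝ) < n := by exact_mod_cast hn0
  set t := Real.sqrt (Real.log (2 * K / δ) / (2 * n)) with htdef
  have ht0 : 0 ≤ t := Real.sqrt_nonneg _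
  have ht2 : t ^ 2 = Real.log (2 * K / δ) / (2 * n) := Real.sq_sqrt (by positivity)
  have htε : t ≤ ε / 2 := by
    have h1 : Real.log (2 * K / δ) / (2 * n) ≤ (ε / 2) ^ 2 := by
      rw [div_le_iff₀ (by positivity)]
      have h2 : 2 * Real.log (2 * K / δ) ≤ n * ε ^ 2 := by
        rw [div_le_iff₀ (by positivity : (0:ℝ) < ε ^ 2)] at hn
        linarith
      nlinarith
    calc t = Real.sqrt (Real.log (2 * K / δ) / (2 * n)) := htdef
      _ ≤ Real.sqrt ((ε / 2) ^ 2) := Real.sqrt_le_sqrt h1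
      _ = ε / 2 := Real.sqrt_sq (by linarith)
  set s := 2 * t with hsdef
  have hs0 : 0 ≤ s := by rw [hsdef]; linarith
  have hsε : s ≤ ε := by rw [hsdef]; linarith
  have hs1 : s ≤ 1 := by linarith
  set g : Fin K → (X × Fin K) → ℝ := fun k z => if z.2 = k then 1 else 0 with hgdef
  have hgmeas : ∀ k, Measurable (g k) := by
    intro k
    exact Measurable.ite (measurable_snd (measurableSet_singleton k))
      measurable_const measurable_const
  have hg01 : ∀ k z, g k z = 0 ∨ g k z = 1 := by
    intro k z
    by_cases hz : z.2 = k <;> simp [hgdef, hz]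
  have hgint : ∀ k, ∫ z, g k z ∂ν = p' k := by
    intro k
    have hms : MeasurableSet {z : X × Fin K | z.2 = k} :=
      measurable_snd (measurableSet_singleton k)
    have hind : (fun z => g k z) =
        Set.indicator {z : X × Fin K | z.2 = k} (fun _ => (1:ℝ)) := by
      funext z
      by_cases hz : z.2 = k <;> simp [hgdef, hz, Set.indicator_apply]
    rw [hind, integral_indicator_const _ hms, hνdef, measureReal_def,
      aux_strata_apply p' F (fun j => (hp' j).1.le) k]
    simp [ENNReal.toReal_ofReal (hp' k).1.le]
  have tail : ∀ k, μ {ω | (n:ℝ) * s ≤ |(∑ i, g k (ω i)) - n * p' k|} ≤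
      ENNReal.ofReal (δ / K) := by
    intro k
    refine (aux_bernoulli_tail ν (g k) (hgmeas k) (hg01 k) (p' k) (hε0.trans (hp'ε k).1).le
      (hp' k).2.le (hgint k) n s hs0 hs1).trans ?_
    have harg : -((n:ℝ) * s ^ 2) / 2 = -Real.log (2 * K / δ) := by
      have h4 : s ^ 2 = 4 * t ^ 2 := by rw [hsdef]; ring
      rw [h4, ht2]
      field_simp
      ring
    have hexp : Real.exp (-((n:ℝ) * s ^ 2) / 2) = δ / (2 * K) := by
      rw [harg, Real.exp_neg, Real.exp_log (by positivity), inv_div]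
    rw [hexp, (by norm_num : (2:ℝ≥0∞) = ENNReal.ofReal 2),
      ← ENNReal.ofReal_mul (by norm_num : (0:ℝ) ≤ 2)]
    refine le_of_eq ?_
    congr 1
    field_simp
  set E := {ω : Fin n → X × Fin K | ∀ k, |(∑ i, g k (ω i)) - n * p' k| ≤ n * s} with hEdef
  have hcompl : μ Eᶜ ≤ ENNReal.ofReal δ := by
    have hsub : Eᶜ ⊆ ⋃ k, {ω : Fin n → X × Fin K |
        (n:ℝ) * s ≤ |(∑ i, g k (ω i)) - n * p' k|} := by
      intro ω hω
      simp only [hEdef, Set.mem_compl_iff, Set.mem_setOf_eq, not_forall] at hω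
      obtain ⟨k, hk⟩ := hω
      exact Set.mem_iUnion.mpr ⟨k, le_of_lt (lt_of_not_ge hk)⟩
    calc μ Eᶜ ≤ μ (⋃ k, {ω : Fin n → X × Fin K |
          (n:ℝ) * s ≤ |(∑ i, g k (ω i)) - n * p' k|}) := measure_mono hsub
      _ ≤ ∑' k : Fin K, μ {ω : Fin n → X × Fin K |
          (n:ℝ) * s ≤ |(∑ i, g k (ω i)) - n * p' k|} := measure_iUnion_le _
      _ = ∑ k : Fin K, μ {ω : Fin n → X × Fin K |
          (n:ℝ) * s ≤ |(∑ i, g k (ω i)) - n * p' k|} := tsum_fintype _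
      _ ≤ ∑ _k : Fin K, ENNReal.ofReal (δ / K) := Finset.sum_le_sum fun k _ => tail k
      _ = (K : ℝ≥0∞) * ENNReal.ofReal (δ / K) := by
          rw [Finset.sum_const, Finset.card_univ, Fintype.card_fin, nsmul_eq_mul]
      _ = ENNReal.ofReal δ := by
          rw [show ((K:ℕ) : ℝ≥0∞) = ENNReal.ofReal (K:ℝ) by
            rw [ENNReal.ofReal_natCast], ← ENNReal.ofReal_mul (by positivity)]
          congr 1
          field_simp
  have hE : ENNReal.ofReal (1 - δ) ≤ μ E := by
    have h1 : (1:ℝ≥0∞) ≤ μ E + μ Eᶜ := by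
      calc (1:ℝ≥0∞) = μ Set.univ := measure_univ.symm
        _ = μ (E ∪ Eᶜ) := by rw [Set.union_compl_self]
        _ ≤ μ E + μ Eᶜ := measure_union_le _ _
    have h2 : ENNReal.ofReal (1 - δ) + ENNReal.ofReal δ ≤ μ E + ENNReal.ofReal δ := by
      rw [← ENNReal.ofReal_add (by linarith) hδ0.le]
      simp only [sub_add_cancel]
      calc ENNReal.ofReal 1 = 1 := ENNReal.ofReal_one
        _ ≤ μ E + μ Eᶜ := h1
        _ ≤ μ E + ENNReal.ofReal δ := add_le_add_right hcompl _
    exact (ENNReal.add_le_add_iff_right ENNReal.ofReal_ne_top).mp h2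
  refine le_trans hE (measure_mono ?_)
  intro ω hω
  have hd : ∀ k, |(nStratum ω k : ℝ) - n * p' k| ≤ n * s := by
    intro k
    have hk := hω k
    rwa [show (∑ i, g k (ω i)) = (nStratum ω k : ℝ) by
      simp only [hgdef]; exact aux_count ω k] at hk
  exact aux_det p p' ℓ L ε s t (fun k => (hp k).1.le) hpsum (fun k => (hp'ε k).1)
    hε0 (by linarith) hℓnonneg hℓle hn0 hsdef ht0 hsε ω hd
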